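/- arXiv:2111.07165 — 2 statements merged into one kernel-verified Lean document; each statement's English description precedes it below -/
import Mathlib

section
/- Let E, E♯, F be injective limits of sequences of Banach spaces {E_j}, {E♯_k}, {F_k} with compact inclusion maps (DFS spaces), with E ↪ E♯₀ continuously, and let F♯ be a Hausdorff topological vector space. If a map of pairs T: (E♯, E) → (F♯, F) satisfies property (H), then the continuous linear map T: E → F has closed range. -/
/- A DFS space: `E` is the injective limit of a sequence of Banach spaces `EJ j`
with injective compact linking maps; `E` carries the inductive-limit topology
(expressed by the universal property below) and is the union of the steps. -/
def IsDFSLimit (E : Type) [AddCommGroup E] [Module ℝ E] [TopologicalSpace E]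
    (EJ : ℕ → Type) [∀ j, NormedAddCommGroup (EJ j)] [∀ j, NormedSpace ℝ (EJ j)]
    [∀ j, CompleteSpace (EJ j)]
    (link : ∀ j, EJ j →L[ℝ] EJ (j + 1)) (incl : ∀ j, EJ j →L[ℝ] E) : Prop :=
  (∀ j, Function.Injective (link j)) ∧
  (∀ j, IsCompactOperator (link j)) ∧
  (∀ j, Function.Injective (incl j)) ∧
  (∀ j, ∀ x, incl (j + 1) (link j x) = incl j x) ∧
  (∀ x : E, ∃ j y, incl j y = x) ∧
  (∀ (X : Type) [AddCommGroup X] [Module ℝ X] [TopologicalSpace X],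
    ∀ f : E →ₗ[ℝ] X, (∀ j, Continuous (f ∘ incl j)) → Continuous f)

open Metric Set Filter Topology

section Key

variable {Y X₀ X₁ X₂ Z : Type*}
  [NormedAddCommGroup Y] [NormedSpace ℝ Y] [CompleteSpace Y]
  [NormedAddCommGroup X₀] [NormedSpace ℝ X₀] [CompleteSpace X₀]
  [NormedAddCommGroup X₁] [NormedSpace ℝ X₁] [CompleteSpace X₁]
  [NormedAddCommGroup X₂] [NormedSpace ℝ X₂]
  [AddCommGroup Z] [Module ℝ Z] [TopologicalSpace Z] [T2Space Z]

theorem key_closed (S : Y →L[ℝ] Z) (Φ₀ : X₀ →L[ℝ] Z) (Φ₁ : X₁ →L[ℝ] Z) (Φ₂ : X₂ →L[ℝ] Z)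
    (ℓ₀ : X₀ →L[ℝ] X₁) (ℓ₁ : X₁ →L[ℝ] X₂)
    (h₀ : ∀ x, Φ₁ (ℓ₀ x) = Φ₀ x) (h₁ : ∀ x, Φ₂ (ℓ₁ x) = Φ₁ x)
    (hc₀ : IsCompactOperator ℓ₀) (hc₁ : IsCompactOperator ℓ₁)
    (hrig : ∀ y : Y, S y ∈ Set.range Φ₂ → S y ∈ Set.range Φ₀) :
    IsClosed {y : Y | S y ∈ Set.range Φ₀} := by
  classical
  -- the kernel of Φ₁ is a closed submodule
  set N : Submodule ℝ X₁ := LinearMap.ker (Φ₁ : X₁ →ₗ[ℝ] Z) with hN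
  haveI hNclosed : IsClosed ((N : Set X₁)) := by
    have : (N : Set X₁) = Φ₁ ⁻¹' {0} := rfl
    rw [this]
    exact isClosed_singleton.preimage Φ₁.continuous
  -- the quotient and the projection, as a continuous linear map
  let Q := X₁ ⧸ N
  let mkc : X₁ →L[ℝ] Q := N.mkQ.mkContinuous 1 (fun x => by
    simpa using Submodule.Quotient.norm_mk_le N x)
  have mkc_apply : ∀ x : X₁, mkc x = Submodule.Quotient.mk x := fun x => rfl
  -- the projection is an open map
  have hopen : IsOpenMap (fun u : X₁ => mkc u) := by
    intro U hU
    rw [isOpen_iff_mem_nhds]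
    rintro _ ⟨x, hxU, rfl⟩
    rcases Metric.isOpen_iff.1 hU x hxU with ⟨ε, hε, hball⟩
    rw [Metric.mem_nhds_iff]
    refine ⟨ε, hε, fun q hq => ?_⟩
    have hd : ‖q - mkc x‖ < ε := by
      rw [← dist_eq_norm]; exact mem_ball.1 hq
    have hpos : (0:ℝ) < ε - ‖q - mkc x‖ := by linarith
    obtain ⟨v, hv_eq, hv⟩ := Submodule.Quotient.norm_mk_lt (q - mkc x) hpos
    refine ⟨x + v, hball ?_, ?_⟩
    · rw [mem_ball, dist_eq_norm]
      simpa using by linarith [hv]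
    · show mkc (x + v) = q
      rw [map_add, mkc_apply v, hv_eq]
      abel
  -- the induced map on the quotient
  let Φhat : Q →ₗ[ℝ] Z := N.liftQ (Φ₁ : X₁ →ₗ[ℝ] Z) (le_of_eq hN)
  have Φhat_mk : ∀ x : X₁, Φhat (mkc x) = Φ₁ x := fun x => rfl
  -- the two graph submodules
  set G₀ : Submodule ℝ (Y × X₀) := LinearMap.ker
    ((Φ₀ : X₀ →ₗ[ℝ] Z).comp (LinearMap.snd ℝ Y X₀) -
      (S : Y →ₗ[ℝ] Z).comp (LinearMap.fst ℝ Y X₀)) with hG₀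
  have memG₀ : ∀ p : Y × X₀, p ∈ G₀ ↔ Φ₀ p.2 = S p.1 := by
    intro p
    rw [hG₀, LinearMap.mem_ker, LinearMap.sub_apply, sub_eq_zero]
    rfl
  set G₁ : Submodule ℝ (Y × Q) := LinearMap.ker
    (Φhat.comp (LinearMap.snd ℝ Y Q) -
      (S : Y →ₗ[ℝ] Z).comp (LinearMap.fst ℝ Y Q)) with hG₁
  have memG₁ : ∀ p : Y × Q, p ∈ G₁ ↔ Φhat p.2 = S p.1 := by
    intro p
    rw [hG₁, LinearMap.mem_ker, LinearMap.sub_apply, sub_eq_zero]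
    rfl
  -- G₀ is closed
  have hG₀closed : IsClosed ((G₀ : Set (Y × X₀))) := by
    have : (G₀ : Set (Y × X₀)) = (fun p : Y × X₀ => (Φ₀ p.2, S p.1)) ⁻¹' (Set.diagonal Z) := by
      ext p
      simp only [Set.mem_preimage, Set.mem_diagonal_iff, SetLike.mem_coe, memG₀]
    rw [this]
    exact isClosed_diagonal.preimage
      ((Φ₀.continuous.comp continuous_snd).prodMk (S.continuous.comp continuous_fst))
  -- G₁ is closed, using openness of the quotient map
  have hG₁closed : IsClosed ((G₁ : Set (Y × Q))) := by
    set m : Y × X₁ → Y × Q := fun p => (p.1, mkc p.2) with hm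
    have hmsurj : Function.Surjective m := by
      rintro ⟨y, q⟩
      obtain ⟨u, rfl⟩ := Submodule.Quotient.mk_surjective N q
      exact ⟨(y, u), rfl⟩
    have hmopen : IsOpenMap m := IsOpenMap.id.prodMap hopen
    have hpre : m ⁻¹' (G₁ : Set (Y × Q))ᶜ = ((fun p : Y × X₁ =>
        (Φ₁ p.2, S p.1)) ⁻¹' (Set.diagonal Z))ᶜ := by
      ext p
      simp only [Set.mem_preimage, Set.mem_compl_iff, SetLike.mem_coe, memG₁,
        Set.mem_diagonal_iff]
      constructor
      · intro h hcontra; exact h hcontra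
      · intro h hcontra; exact h hcontra
    rw [← isOpen_compl_iff]
    have : (G₁ : Set (Y × Q))ᶜ = m '' (m ⁻¹' (G₁ : Set (Y × Q))ᶜ) :=
      (Set.image_preimage_eq _ hmsurj).symm
    rw [this, hpre]
    apply hmopen
    rw [isOpen_compl_iff]
    exact isClosed_diagonal.preimage
      ((Φ₁.continuous.comp continuous_snd).prodMk (S.continuous.comp continuous_fst))
  haveI : CompleteSpace G₀ := hG₀closed.completeSpace_coe
  haveI : CompleteSpace G₁ := hG₁closed.completeSpace_coe
  -- the connecting map μ : G₀ → G₁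
  have hμmem : ∀ x : G₀, ((ContinuousLinearMap.prodMap (ContinuousLinearMap.id ℝ Y)
      (mkc.comp ℓ₀)) ((G₀.subtypeL) x)) ∈ G₁ := by
    rintro ⟨⟨y, u⟩, hp⟩
    rw [memG₁]
    have h2 : Φ₀ u = S y := (memG₀ _).1 hp
    show Φhat (mkc (ℓ₀ u)) = S y
    rw [Φhat_mk, h₀, h2]
  set μ : G₀ →L[ℝ] G₁ := ContinuousLinearMap.codRestrict
    ((ContinuousLinearMap.prodMap (ContinuousLinearMap.id ℝ Y) (mkc.comp ℓ₀)).comp G₀.subtypeL)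
    G₁ hμmem with hμ
  have hμsurj : Function.Surjective μ := by
    rintro ⟨⟨y, q⟩, hp⟩
    obtain ⟨u₁, rfl⟩ := Submodule.Quotient.mk_surjective N q
    have h2 : Φ₁ u₁ = S y := by
      have := (memG₁ _).1 hp
      rwa [show Φhat (Submodule.Quotient.mk u₁) = Φ₁ u₁ from rfl] at this
    have hSy : S y ∈ Set.range Φ₀ := by
      apply hrig
      exact ⟨ℓ₁ u₁, by rw [h₁, h2]⟩
    obtain ⟨u₀, hu₀⟩ := hSy
    refine ⟨⟨(y, u₀), (memG₀ _).2 (by rw [hu₀])⟩, ?_⟩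
    apply Subtype.ext
    apply Prod.ext
    · rfl
    · show mkc (ℓ₀ u₀) = Submodule.Quotient.mk u₁
      rw [mkc_apply]
      rw [Submodule.Quotient.eq]
      rw [hN, LinearMap.mem_ker]
      show Φ₁ (ℓ₀ u₀ - u₁) = 0
      rw [map_sub, h₀, hu₀, h2, sub_self]
  obtain ⟨C, hC0, hC⟩ := μ.exists_preimage_norm_le hμsurj
  -- the uniform bound: quotient norms of liftings are controlled by the norm of y
  have key : ∃ c : ℝ, 0 < c ∧ ∀ (y : Y) (u : X₁), Φ₁ u = S y → ‖mkc u‖ ≤ c * ‖y‖ := by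
    by_contra hcon
    push_neg at hcon
    have hsel : ∀ n : ℕ, ∃ (y : Y) (u : X₁), Φ₁ u = S y ∧ (n + 1 : ℝ) * ‖y‖ < ‖mkc u‖ := by
      intro n
      obtain ⟨y, u, h1, h2⟩ := hcon (n + 1 : ℝ) (by positivity)
      exact ⟨y, u, h1, h2⟩
    choose ys us h1 h2 using hsel
    have ht : ∀ n, (0:ℝ) < ‖mkc (us n)‖ := fun n =>
      lt_of_le_of_lt (by positivity) (h2 n)
    -- normalized sequences
    set y' : ℕ → Y := fun n => (‖mkc (us n)‖)⁻¹ • ys n with hy'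
    set u' : ℕ → X₁ := fun n => (‖mkc (us n)‖)⁻¹ • us n with hu'
    have hrel : ∀ n, Φ₁ (u' n) = S (y' n) := by
      intro n; rw [hy', hu']; simp only [map_smul, h1]
    have hnorm_u' : ∀ n, ‖mkc (u' n)‖ = 1 := by
      intro n
      rw [hu']
      simp only [map_smul, norm_smul, norm_inv, norm_norm]
      rw [inv_mul_cancel₀ (ne_of_gt (ht n))]
    have hnorm_y' : ∀ n, ‖y' n‖ < 1 / (n + 1 : ℝ) := by
      intro n
      rw [hy', norm_smul, norm_inv, norm_norm]
      rw [inv_mul_lt_iff₀ (ht n)]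
      calc ‖ys n‖ < ‖mkc (us n)‖ / (n + 1 : ℝ) := by
            rw [lt_div_iff₀ (by positivity : (0:ℝ) < (n:ℝ) + 1)]
            rw [mul_comm]; exact h2 n
        _ ≤ ‖mkc (us n)‖ * (1 / (n + 1 : ℝ)) := by
            rw [mul_one_div]
    have hy'0 : Filter.Tendsto y' Filter.atTop (nhds 0) := by
      rw [tendsto_zero_iff_norm_tendsto_zero]
      apply squeeze_zero (fun n => norm_nonneg _) (fun n => le_of_lt (hnorm_y' n))
      exact tendsto_one_div_add_atTop_nhds_zero_nat
    -- elements of G₁ with norm at most 1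
    have hmem1 : ∀ n, (y' n, mkc (u' n)) ∈ G₁ := by
      intro n; rw [memG₁]; show Φhat (mkc (u' n)) = S (y' n); rw [Φhat_mk, hrel]
    set g : ℕ → G₁ := fun n => ⟨(y' n, mkc (u' n)), hmem1 n⟩ with hg
    have hgnorm : ∀ n, ‖g n‖ ≤ 1 := by
      intro n
      have : ‖g n‖ = max ‖y' n‖ ‖mkc (u' n)‖ := rfl
      rw [this, hnorm_u']
      apply max_le (le_of_lt (lt_of_lt_of_le (hnorm_y' n) (by
        rw [div_le_one (by positivity)]; linarith [Nat.cast_nonneg (α := ℝ) n]))) le_rfl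
    -- preimages under μ with controlled norms
    have hx : ∀ n, ∃ x : G₀, μ x = g n ∧ ‖x‖ ≤ C := by
      intro n
      obtain ⟨x, hx1, hx2⟩ := hC (g n)
      exact ⟨x, hx1, le_trans hx2 (by
        calc C * ‖g n‖ ≤ C * 1 := by
              exact mul_le_mul_of_nonneg_left (hgnorm n) (le_of_lt hC0)
          _ = C := mul_one C)⟩
    choose xs hx1 hx2 using hx
    -- the second components are bounded in X₀, and map onto the quotient classes
    set ws : ℕ → X₀ := fun n => ((xs n : Y × X₀)).2 with hws
    have hwbound : ∀ n, ‖ws n‖ ≤ C := by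
      intro n
      calc ‖ws n‖ ≤ max ‖((xs n : Y × X₀)).1‖ ‖ws n‖ := le_max_right _ _
        _ = ‖xs n‖ := rfl
        _ ≤ C := hx2 n
    have hfst : ∀ n, ((xs n : Y × X₀)).1 = y' n := by
      intro n
      have := congrArg (fun z : G₁ => ((z : Y × Q)).1) (hx1 n)
      exact this
    have hsnd : ∀ n, mkc (ℓ₀ (ws n)) = mkc (u' n) := by
      intro n
      have := congrArg (fun z : G₁ => ((z : Y × Q)).2) (hx1 n)
      exact this
    have hrel0 : ∀ n, Φ₀ (ws n) = S (y' n) := by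
      intro n
      have := (memG₀ _).1 (xs n).2
      rwa [hfst n] at this
    -- compactness: extract a convergent subsequence of ℓ₀ (ws n)
    obtain ⟨K, hK, hKsub⟩ := hc₀.image_closedBall_subset_compact (𝕜₁ := ℝ) C
    have hmemK : ∀ n, ℓ₀ (ws n) ∈ K := fun n =>
      hKsub ⟨ws n, Metric.mem_closedBall.2 (by simpa using hwbound n), rfl⟩
    obtain ⟨v, hvK, φ, hφ, hconv⟩ := hK.tendsto_subseq hmemK
    -- the limit v lies in the kernel of Φ₁
    have hlim1 : Filter.Tendsto (fun i => Φ₁ (ℓ₀ (ws (φ i)))) Filter.atTop (nhds (Φ₁ v)) :=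
      (Φ₁.continuous.tendsto v).comp hconv
    have hlim2 : Filter.Tendsto (fun i => Φ₁ (ℓ₀ (ws (φ i)))) Filter.atTop (nhds 0) := by
      have : (fun i => Φ₁ (ℓ₀ (ws (φ i)))) = fun i => S (y' (φ i)) := by
        funext i; rw [h₀, hrel0]
      rw [this]
      have : Filter.Tendsto (fun i => y' (φ i)) Filter.atTop (nhds 0) :=
        hy'0.comp (hφ.tendsto_atTop)
      simpa [Function.comp_def] using (S.continuous.tendsto 0).comp this
    have hΦ₁v : Φ₁ v = 0 := tendsto_nhds_unique hlim1 hlim2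
    -- hence mkc v = 0, but mkc (u' n) has norm one: contradiction
    have hmkv : mkc v = 0 := by
      rw [mkc_apply, Submodule.Quotient.mk_eq_zero, hN, LinearMap.mem_ker]
      exact hΦ₁v
    have hlim3 : Filter.Tendsto (fun i => ‖mkc (ℓ₀ (ws (φ i)))‖) Filter.atTop (nhds 0) := by
      have := (mkc.continuous.tendsto v).comp hconv
      rw [hmkv] at this
      have h0 : ‖(0 : Q)‖ = 0 := norm_zero
      simpa [Function.comp_def, h0] using (continuous_norm.tendsto (0 : Q)).comp this
    have : Filter.Tendsto (fun _ : ℕ => (1:ℝ)) Filter.atTop (nhds 0) := by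
      have heq : (fun i => ‖mkc (ℓ₀ (ws (φ i)))‖) = fun _ : ℕ => (1:ℝ) := by
        funext i; rw [hsnd, hnorm_u']
      rwa [heq] at hlim3
    exact absurd (tendsto_nhds_unique this tendsto_const_nhds) zero_ne_one
  -- now prove sequential closedness
  obtain ⟨c, hc0, hcb⟩ := key
  apply IsSeqClosed.isClosed
  intro yseq y hmem hlim
  -- bound on the norms of yseq
  have hbdd : ∃ M : ℝ, ∀ n, ‖yseq n‖ ≤ M := by
    have : BddAbove (Set.range fun n => ‖yseq n‖) :=
      (hlim.norm).bddAbove_range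
    obtain ⟨M, hM⟩ := this
    exact ⟨M, fun n => hM ⟨n, rfl⟩⟩
  obtain ⟨M, hM⟩ := hbdd
  -- liftings at level 0 and their images at level 1
  have hsel : ∀ n, ∃ u : X₀, Φ₀ u = S (yseq n) := fun n => hmem n
  choose u0 hu0 using hsel
  -- representatives of bounded quotient norm
  have hq : ∀ n, ‖mkc (ℓ₀ (u0 n))‖ ≤ c * M := by
    intro n
    calc ‖mkc (ℓ₀ (u0 n))‖ ≤ c * ‖yseq n‖ := hcb _ _ (by rw [h₀, hu0])
      _ ≤ c * M := mul_le_mul_of_nonneg_left (hM n) (le_of_lt hc0)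
  have hrep : ∀ n, ∃ w : X₁, Φ₁ w = S (yseq n) ∧ ‖w‖ ≤ c * M + 1 := by
    intro n
    obtain ⟨w, hw1, hw2⟩ := Submodule.Quotient.norm_mk_lt (mkc (ℓ₀ (u0 n))) one_pos
    refine ⟨w, ?_, ?_⟩
    · have hdiff : w - ℓ₀ (u0 n) ∈ N :=
        (Submodule.Quotient.eq N).1 (hw1.trans (mkc_apply _).symm ▸ hw1)
      have hker : Φ₁ (w - ℓ₀ (u0 n)) = 0 := LinearMap.mem_ker.1 hdiff
      rw [map_sub] at hker
      have : Φ₁ w = Φ₁ (ℓ₀ (u0 n)) := sub_eq_zero.1 hker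
      rw [this, h₀, hu0]
    · exact le_trans (le_of_lt hw2) (by linarith [hq n])
  choose w hw1 hw2 using hrep
  -- compactness at level 1
  obtain ⟨K, hK, hKsub⟩ := hc₁.image_closedBall_subset_compact (𝕜₁ := ℝ) (c * M + 1)
  have hmemK : ∀ n, ℓ₁ (w n) ∈ K := fun n =>
    hKsub ⟨w n, Metric.mem_closedBall.2 (by simpa using hw2 n), rfl⟩
  obtain ⟨v, hvK, φ, hφ, hconv⟩ := hK.tendsto_subseq hmemK
  have hlim1 : Filter.Tendsto (fun i => Φ₂ (ℓ₁ (w (φ i)))) Filter.atTop (nhds (Φ₂ v)) :=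
    (Φ₂.continuous.tendsto v).comp hconv
  have hlim2 : Filter.Tendsto (fun i => Φ₂ (ℓ₁ (w (φ i)))) Filter.atTop (nhds (S y)) := by
    have heq : (fun i => Φ₂ (ℓ₁ (w (φ i)))) = fun i => S (yseq (φ i)) := by
      funext i; rw [h₁, hw1]
    rw [heq]
    exact (S.continuous.tendsto y).comp (hlim.comp hφ.tendsto_atTop)
  have : S y = Φ₂ v := (tendsto_nhds_unique hlim1 hlim2).symm
  exact hrig y ⟨v, this.symm⟩

end Key


/-- A set is closed in an inductive limit (in the sense of the universal property)
as soon as all its preimages in the steps are closed. -/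
theorem final_topology_closed {F : Type} [AddCommGroup F] [Module ℝ F] [TopologicalSpace F]
    (FJ : ℕ → Type) [∀ j, NormedAddCommGroup (FJ j)] [∀ j, NormedSpace ℝ (FJ j)]
    (inclF : ∀ j, FJ j →L[ℝ] F)
    (huniv : ∀ (X : Type) [AddCommGroup X] [Module ℝ X] [TopologicalSpace X],
      ∀ f : F →ₗ[ℝ] X, (∀ j, Continuous (f ∘ inclF j)) → Continuous f)
    (s : Set F) (hs : ∀ k, IsClosed ((inclF k) ⁻¹' s)) : IsClosed s := by
  have hid := @huniv F _ _ (⨆ k, TopologicalSpace.coinduced (⇑(inclF k)) inferInstance)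
    LinearMap.id (fun j => by
      have heq : (⇑(LinearMap.id : F →ₗ[ℝ] F)) ∘ ⇑(inclF j) = ⇑(inclF j) := rfl
      rw [heq]
      exact continuous_iSup_rng continuous_coinduced_rng)
  have hcl : IsClosed[⨆ k, TopologicalSpace.coinduced (⇑(inclF k)) inferInstance] s := by
    rw [isClosed_iSup_iff]
    intro k
    rw [isClosed_coinduced]
    exact hs k
  have h2 := @IsClosed.preimage F F _ (⨆ k, TopologicalSpace.coinduced (⇑(inclF k)) inferInstance)
    (⇑(LinearMap.id : F →ₗ[ℝ] F)) hid s hcl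
  simpa using h2

/- Theorem 5.2: property (H) for a map of pairs between DFS spaces implies
closed range of `T : E → F`.  Pairs are modeled by continuous linear
injections `iE : E →L E♯`, `jF : F →L F♯` and `TE` is the induced map. -/
theorem stmt12
    (E Esharp F Fsharp : Type)
    [AddCommGroup E] [Module ℝ E] [TopologicalSpace E]
    [AddCommGroup Esharp] [Module ℝ Esharp] [TopologicalSpace Esharp]
    [AddCommGroup F] [Module ℝ F] [TopologicalSpace F]
    [AddCommGroup Fsharp] [Module ℝ Fsharp] [TopologicalSpace Fsharp]
    [T2Space Fsharp]
    (EJ ESJ FJ : ℕ → Type)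
    [∀ j, NormedAddCommGroup (EJ j)] [∀ j, NormedSpace ℝ (EJ j)]
    [∀ j, CompleteSpace (EJ j)]
    [∀ j, NormedAddCommGroup (ESJ j)] [∀ j, NormedSpace ℝ (ESJ j)]
    [∀ j, CompleteSpace (ESJ j)]
    [∀ j, NormedAddCommGroup (FJ j)] [∀ j, NormedSpace ℝ (FJ j)]
    [∀ j, CompleteSpace (FJ j)]
    (linkE : ∀ j, EJ j →L[ℝ] EJ (j + 1)) (inclE : ∀ j, EJ j →L[ℝ] E)
    (linkES : ∀ j, ESJ j →L[ℝ] ESJ (j + 1)) (inclES : ∀ j, ESJ j →L[ℝ] Esharp)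
    (linkF : ∀ j, FJ j →L[ℝ] FJ (j + 1)) (inclF : ∀ j, FJ j →L[ℝ] F)
    (hE : IsDFSLimit E EJ linkE inclE)
    (hES : IsDFSLimit Esharp ESJ linkES inclES)
    (hF : IsDFSLimit F FJ linkF inclF)
    (iE : E →L[ℝ] Esharp) (hiE : Function.Injective iE)
    (jF : F →L[ℝ] Fsharp) (hjF : Function.Injective jF)
    -- E ↪ E♯₀ continuously:
    (e0 : E →L[ℝ] ESJ 0) (he0 : ∀ x : E, inclES 0 (e0 x) = iE x)
    (T : Esharp →L[ℝ] Fsharp) (TE : E →L[ℝ] F)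
    (hcomp : ∀ e : E, jF (TE e) = T (iE e))
    -- property (H):
    (hH : ∀ u : Esharp, T u ∈ Set.range jF → u ∈ Set.range iE) :
    IsClosed (Set.range TE) := by
  obtain ⟨-, hEScpt, hESinj, hEScomm, -, -⟩ := hES
  obtain ⟨-, -, -, -, -, hFuniv⟩ := hF
  -- Step 1: each preimage (inclF k) ⁻¹' (range TE) is closed in the Banach step FJ k
  have hper : ∀ k, IsClosed ((inclF k) ⁻¹' (Set.range TE)) := by
    intro k
    have h₀ : ∀ x : ESJ 0, (T.comp (inclES 1)) ((linkES 0) x) = (T.comp (inclES 0)) x := by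
      intro x
      simp only [ContinuousLinearMap.comp_apply]
      rw [hEScomm 0 x]
    have h₁ : ∀ x : ESJ 1, (T.comp (inclES 2)) ((linkES 1) x) = (T.comp (inclES 1)) x := by
      intro x
      simp only [ContinuousLinearMap.comp_apply]
      rw [hEScomm 1 x]
    have hrig : ∀ y : FJ k, (jF.comp (inclF k)) y ∈ Set.range (T.comp (inclES 2)) →
        (jF.comp (inclF k)) y ∈ Set.range (T.comp (inclES 0)) := by
      intro y hy
      obtain ⟨u, hu⟩ := hy
      simp only [ContinuousLinearMap.comp_apply] at hu ⊢
      obtain ⟨e, he⟩ := hH (inclES 2 u) ⟨inclF k y, hu.symm⟩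
      exact ⟨e0 e, by show T ((inclES 0) (e0 e)) = _; rw [he0, he, hu]⟩
    have hkey := key_closed (jF.comp (inclF k)) (T.comp (inclES 0)) (T.comp (inclES 1))
      (T.comp (inclES 2)) (linkES 0) (linkES 1) h₀ h₁ (hEScpt 0) (hEScpt 1) hrig
    have hset : {y : FJ k | (jF.comp (inclF k)) y ∈ Set.range (T.comp (inclES 0))} =
        (inclF k) ⁻¹' (Set.range TE) := by
      ext y
      simp only [Set.mem_setOf_eq, Set.mem_preimage, ContinuousLinearMap.comp_apply]
      constructor
      · rintro ⟨u, hu⟩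
        rw [ContinuousLinearMap.comp_apply] at hu
        obtain ⟨e, he⟩ := hH (inclES 0 u) ⟨inclF k y, hu.symm⟩
        refine ⟨e, hjF ?_⟩
        rw [hcomp, he, hu]
      · rintro ⟨e, he⟩
        exact ⟨e0 e, by show T ((inclES 0) (e0 e)) = _; rw [he0, ← hcomp, he]⟩
    rw [← hset]
    exact hkey
  exact final_topology_closed FJ inclF hFuniv _ hper
end

section
/- With the hypotheses of the previous theorem but assuming only property (H′) for T (for every u ∈ E♯ with Tu ∈ F there exists v ∈ E with Tv = Tu), the map T: E → F has closed range. -/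
set_option maxHeartbeats 1000000

open Filter Topology Set

section aux

lemma isClosed_of_preimages {F : Type} [AddCommGroup F] [Module ℝ F] [τF : TopologicalSpace F]
    (FJ : ℕ → Type) [∀ j, NormedAddCommGroup (FJ j)] [∀ j, NormedSpace ℝ (FJ j)]
    (inclF : ∀ j, FJ j →L[ℝ] F)
    (hUP : ∀ (X : Type) [AddCommGroup X] [Module ℝ X] [TopologicalSpace X],
      ∀ f : F →ₗ[ℝ] X, (∀ j, Continuous (⇑f ∘ ⇑(inclF j))) → Continuous f)
    (C : Set F) (hC : ∀ j, IsClosed ((inclF j) ⁻¹' C)) : IsClosed C := by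
  let t : TopologicalSpace F := ⨆ j, TopologicalSpace.coinduced (inclF j) inferInstance
  have hid : @Continuous F F τF t id := by
    have h := @hUP F ‹AddCommGroup F› ‹Module ℝ F› t LinearMap.id (fun j => by
      have : @Continuous (FJ j) F _ t (⇑(inclF j)) :=
        continuous_iSup_rng (i := j) continuous_coinduced_rng
      simpa using this)
    simpa using h
  have hCt : IsClosed[t] C := by
    have hopen : IsOpen[t] Cᶜ := by
      rw [isOpen_iSup_iff]
      intro j
      rw [isOpen_coinduced]
      rw [Set.preimage_compl]
      exact (hC j).isOpen_compl
    exact ⟨hopen⟩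
  have h2 := @IsClosed.preimage F F τF t id hid C hCt
  simpa using h2


open Filter Topology Set

section core
variable {G1 G2 X Z : Type}
  [NormedAddCommGroup G1] [NormedSpace ℝ G1] [CompleteSpace G1]
  [NormedAddCommGroup G2] [NormedSpace ℝ G2] [CompleteSpace G2]
  [NormedAddCommGroup X] [NormedSpace ℝ X] [CompleteSpace X]
  [AddCommGroup Z] [Module ℝ Z] [TopologicalSpace Z] [T2Space Z]

omit [T2Space Z] in
theorem liftQ_continuous {M : Type*} [NormedAddCommGroup M] [NormedSpace ℝ M]
    (S : Submodule ℝ M) (f : M →ₗ[ℝ] Z) (h : S ≤ LinearMap.ker f)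
    (hf : Continuous f) : Continuous (S.liftQ f h) := by
  have hq : IsQuotientMap (Submodule.Quotient.mk (p := S)) := isQuotientMap_quotient_mk'
  rw [hq.continuous_iff]
  exact hf

/-- Core Banach-level lemma. -/
theorem core_closed (L : G1 →L[ℝ] G2) (hL : IsCompactOperator L)
    (T1 : G1 →L[ℝ] Z) (T2 : G2 →L[ℝ] Z) (hLT : ∀ x, T2 (L x) = T1 x)
    (S : X →L[ℝ] Z)
    (hr : S ⁻¹' (Set.range T1) = S ⁻¹' (Set.range T2)) :
    IsClosed (S ⁻¹' (Set.range T1)) := by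
  classical
  set K1 : Submodule ℝ G1 := LinearMap.ker (T1 : G1 →ₗ[ℝ] Z) with hK1def
  set K2 : Submodule ℝ G2 := LinearMap.ker (T2 : G2 →ₗ[ℝ] Z) with hK2def
  haveI hK1c : IsClosed (K1 : Set G1) := ContinuousLinearMap.isClosed_ker T1
  haveI hK2c : IsClosed (K2 : Set G2) := ContinuousLinearMap.isClosed_ker T2
  have hle1 : K1 ≤ LinearMap.ker (T1 : G1 →ₗ[ℝ] Z) := fun x hx => hx
  have hle2 : K2 ≤ LinearMap.ker (T2 : G2 →ₗ[ℝ] Z) := fun x hx => hx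
  set Tb1 : (G1 ⧸ K1) →ₗ[ℝ] Z := K1.liftQ (T1 : G1 →ₗ[ℝ] Z) hle1 with hTb1def
  set Tb2 : (G2 ⧸ K2) →ₗ[ℝ] Z := K2.liftQ (T2 : G2 →ₗ[ℝ] Z) hle2 with hTb2def
  have hTb1c : Continuous Tb1 := liftQ_continuous _ _ _ T1.continuous
  have hTb2c : Continuous Tb2 := liftQ_continuous _ _ _ T2.continuous
  have hTb2inj : Function.Injective Tb2 := by
    rw [← LinearMap.ker_eq_bot]
    exact Submodule.ker_liftQ_eq_bot _ _ _ (le_of_eq rfl)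
  have hTb1mk : ∀ x : G1, Tb1 (K1.mkQ x) = T1 x := fun x => rfl
  have hTb2mk : ∀ x : G2, Tb2 (K2.mkQ x) = T2 x := fun x => rfl
  have hcomap : K1 ≤ K2.comap (L : G1 →ₗ[ℝ] G2) := by
    intro x hx
    have hx0 : T1 x = 0 := hx
    have : T2 (L x) = 0 := by rw [hLT x, hx0]
    exact this
  set Lb : (G1 ⧸ K1) →ₗ[ℝ] (G2 ⧸ K2) := K1.mapQ K2 (L : G1 →ₗ[ℝ] G2) hcomap with hLbdef
  have hLbmk : ∀ x : G1, Lb (K1.mkQ x) = K2.mkQ (L x) := fun x => rfl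
  have hmk2c : Continuous (K2.mkQ) :=
    (isQuotientMap_quotient_mk' (s := Submodule.quotientRel K2)).continuous
  have hLbc : Continuous Lb := by
    have hq : IsQuotientMap (Submodule.Quotient.mk (p := K1)) := isQuotientMap_quotient_mk'
    rw [hq.continuous_iff]
    exact hmk2c.comp L.continuous
  have hTbLb : ∀ ξ : G1 ⧸ K1, Tb2 (Lb ξ) = Tb1 ξ := by
    intro ξ
    obtain ⟨x, rfl⟩ := Submodule.Quotient.mk_surjective K1 ξ
    show Tb2 (Lb (K1.mkQ x)) = Tb1 (K1.mkQ x)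
    rw [hLbmk, hTb2mk, hTb1mk, hLT]
  set Lc : (G1 ⧸ K1) →L[ℝ] (G2 ⧸ K2) := ⟨Lb, hLbc⟩ with hLcdef
  -- graph submodules
  set H1 : Submodule ℝ ((G1 ⧸ K1) × X) :=
    LinearMap.ker (Tb1.comp (LinearMap.fst ℝ (G1 ⧸ K1) X)
      - (S : X →ₗ[ℝ] Z).comp (LinearMap.snd ℝ (G1 ⧸ K1) X)) with hH1def
  set H2 : Submodule ℝ ((G2 ⧸ K2) × X) :=
    LinearMap.ker (Tb2.comp (LinearMap.fst ℝ (G2 ⧸ K2) X)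
      - (S : X →ₗ[ℝ] Z).comp (LinearMap.snd ℝ (G2 ⧸ K2) X)) with hH2def
  have hH1mem : ∀ p : (G1 ⧸ K1) × X, p ∈ H1 ↔ Tb1 p.1 = S p.2 := by
    intro p
    simp [hH1def, LinearMap.mem_ker, sub_eq_zero]
  have hH2mem : ∀ p : (G2 ⧸ K2) × X, p ∈ H2 ↔ Tb2 p.1 = S p.2 := by
    intro p
    simp [hH2def, LinearMap.mem_ker, sub_eq_zero]
  have hH1c : IsClosed (H1 : Set ((G1 ⧸ K1) × X)) := by
    have : (H1 : Set ((G1 ⧸ K1) × X)) = {p | Tb1 p.1 = S p.2} := by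
      ext p; exact hH1mem p
    rw [this]
    exact isClosed_eq (hTb1c.comp continuous_fst) (S.continuous.comp continuous_snd)
  have hH2c : IsClosed (H2 : Set ((G2 ⧸ K2) × X)) := by
    have : (H2 : Set ((G2 ⧸ K2) × X)) = {p | Tb2 p.1 = S p.2} := by
      ext p; exact hH2mem p
    rw [this]
    exact isClosed_eq (hTb2c.comp continuous_fst) (S.continuous.comp continuous_snd)
  haveI : CompleteSpace H1 := hH1c.completeSpace_coe
  haveI : CompleteSpace H2 := hH2c.completeSpace_coe
  -- the map J : H1 → H2
  set J0 : H1 →L[ℝ] ((G2 ⧸ K2) × X) :=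
    ((Lc.prodMap (ContinuousLinearMap.id ℝ X)).comp H1.subtypeL) with hJ0def
  have hJ0apply : ∀ p : H1, J0 p = (Lb (p : (G1 ⧸ K1) × X).1, (p : (G1 ⧸ K1) × X).2) := by
    intro p
    rfl
  have hJ0mem : ∀ p : H1, J0 p ∈ H2 := by
    intro p
    rw [hJ0apply, hH2mem]
    have h1 : Tb1 (p : (G1 ⧸ K1) × X).1 = S (p : (G1 ⧸ K1) × X).2 := (hH1mem _).mp p.2
    rw [hTbLb, h1]
  set J : H1 →L[ℝ] H2 := J0.codRestrict H2 hJ0mem with hJdef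
  have hJapply : ∀ p : H1, (J p : (G2 ⧸ K2) × X)
      = (Lb (p : (G1 ⧸ K1) × X).1, (p : (G1 ⧸ K1) × X).2) := fun p => hJ0apply p
  -- injectivity of Lb
  have hLbinj : Function.Injective Lb := by
    intro a b hab
    obtain ⟨x, rfl⟩ := Submodule.Quotient.mk_surjective K1 a
    obtain ⟨x', rfl⟩ := Submodule.Quotient.mk_surjective K1 b
    have h1 : K2.mkQ (L x) = K2.mkQ (L x') := by
      rw [← hLbmk, ← hLbmk]; exact hab
    have h2 : L x - L x' ∈ K2 := by
      rwa [← Submodule.Quotient.mk_eq_zero K2, ← Submodule.mkQ_apply, map_sub, sub_eq_zero]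
    have h3 : T2 (L x - L x') = 0 := h2
    have h4 : T1 (x - x') = 0 := by
      rw [map_sub] at h3 ⊢
      rw [hLT, hLT] at h3
      exact h3
    have h5 : x - x' ∈ K1 := h4
    rwa [← Submodule.mkQ_apply, ← Submodule.mkQ_apply, ← sub_eq_zero, ← map_sub,
      Submodule.mkQ_apply, Submodule.Quotient.mk_eq_zero K1]
  have hJinj : Function.Injective J := by
    intro a b hab
    have h1 := congrArg (fun q : H2 => (q : (G2 ⧸ K2) × X)) hab
    simp only [hJapply] at h1
    rw [Prod.mk.injEq] at h1
    obtain ⟨h2, h3⟩ := h1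
    have h4 : (a : (G1 ⧸ K1) × X).1 = (b : (G1 ⧸ K1) × X).1 := hLbinj h2
    apply Subtype.ext
    exact Prod.ext h4 h3
  have hJsurj : Function.Surjective J := by
    intro q
    have h1 : Tb2 (q : (G2 ⧸ K2) × X).1 = S (q : (G2 ⧸ K2) × X).2 := (hH2mem _).mp q.2
    have h2 : (q : (G2 ⧸ K2) × X).2 ∈ S ⁻¹' (Set.range T1) := by
      rw [hr]
      obtain ⟨x2, hx2⟩ := Submodule.Quotient.mk_surjective K2 (q : (G2 ⧸ K2) × X).1
      refine ⟨x2, ?_⟩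
      rw [← h1, ← hx2]
      exact (hTb2mk x2)
    obtain ⟨x1, hx1⟩ := h2
    have hmem : ((K1.mkQ x1, (q : (G2 ⧸ K2) × X).2) : (G1 ⧸ K1) × X) ∈ H1 := by
      rw [hH1mem]
      exact hx1
    refine ⟨⟨_, hmem⟩, ?_⟩
    apply Subtype.ext
    rw [hJapply]
    have hfst : Lb (K1.mkQ x1) = (q : (G2 ⧸ K2) × X).1 := by
      apply hTb2inj
      rw [hTbLb, hTb1mk, hx1, h1]
    exact Prod.ext hfst rfl
  have hJker : LinearMap.ker (J : H1 →ₗ[ℝ] H2) = ⊥ := LinearMap.ker_eq_bot.mpr hJinj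
  have hJrange : LinearMap.range (J : H1 →ₗ[ℝ] H2) = ⊤ := LinearMap.range_eq_top.mpr hJsurj
  set e := ContinuousLinearEquiv.ofBijective J hJker hJrange with hedef
  -- sequential closedness
  refine IsSeqClosed.isClosed ?_
  intro y p hy hyp
  choose w hw using fun n => hy n
  set ξ : ℕ → G1 ⧸ K1 := fun n => K1.mkQ (w n) with hξdef
  have hTb1ξ : ∀ n, Tb1 (ξ n) = S (y n) := fun n => by
    rw [hξdef]; rw [hTb1mk]; exact hw n
  by_cases hbdd : ∃ C : ℝ, ∀ n, ‖ξ n‖ ≤ C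
  · -- bounded case: done by compactness
    obtain ⟨C, hC⟩ := hbdd
    choose x' hx'mk hx'norm using fun n => Submodule.Quotient.norm_mk_lt (ξ n) one_pos
    have hx'T : ∀ n, T1 (x' n) = S (y n) := fun n => by
      rw [← hTb1ξ n, ← hx'mk n]
      rfl
    obtain ⟨Kc, hKc, hKsub⟩ := hL.image_closedBall_subset_compact (C + 1)
    have hmemK : ∀ n, L (x' n) ∈ Kc := by
      intro n
      apply hKsub
      refine ⟨x' n, ?_, rfl⟩
      rw [Metric.mem_closedBall, dist_zero_right]
      have := hx'norm n
      have := hC n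
      linarith
    obtain ⟨b, hbK, ψ, hψmono, hψtend⟩ := hKc.isSeqCompact hmemK
    have h1 : Tendsto (fun n => T2 (L (x' (ψ n)))) atTop (𝓝 (T2 b)) :=
      (T2.continuous.tendsto b).comp hψtend
    have h2 : Tendsto (fun n => T2 (L (x' (ψ n)))) atTop (𝓝 (S p)) := by
      have heq : (fun n => T2 (L (x' (ψ n)))) = fun n => S (y (ψ n)) :=
        funext fun n => by rw [hLT, hx'T]
      rw [heq]
      exact (S.continuous.tendsto p).comp (hyp.comp hψmono.tendsto_atTop)
    have hSp : S p = T2 b := tendsto_nhds_unique h2 h1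
    rw [hr]
    exact ⟨b, hSp.symm⟩
  · -- unbounded case: contradiction via open mapping theorem
    exfalso
    push_neg at hbdd
    have hfreq : ∀ m : ℕ, ∃ᶠ k in atTop, (m : ℝ) + 1 ≤ ‖ξ k‖ := by
      intro m
      rw [Filter.frequently_atTop]
      intro N
      obtain ⟨n, hn⟩ := hbdd ((m : ℝ) + 1 + ∑ k ∈ Finset.range N, ‖ξ k‖)
      have hsumnn : (0:ℝ) ≤ ∑ k ∈ Finset.range N, ‖ξ k‖ :=
        Finset.sum_nonneg fun k _ => norm_nonneg _
      refine ⟨n, ?_, by linarith⟩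
      by_contra hnN
      push_neg at hnN
      have h1 : ‖ξ n‖ ≤ ∑ k ∈ Finset.range N, ‖ξ k‖ :=
        Finset.single_le_sum (fun k _ => norm_nonneg (ξ k)) (Finset.mem_range.mpr hnN)
      have h2 : (0:ℝ) ≤ (m:ℝ) + 1 := by positivity
      linarith
    obtain ⟨φ, hφmono, hφ⟩ := Filter.extraction_forall_of_frequently hfreq
    set d : ℕ → ℝ := fun n => ‖ξ (φ n)‖ with hddef
    have hdge : ∀ n : ℕ, (n : ℝ) + 1 ≤ d n := fun n => hφ n
    have hdpos : ∀ n, 0 < d n := fun n => lt_of_lt_of_le (by positivity) (hdge n)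
    set yh : ℕ → X := fun n => (d n)⁻¹ • y (φ n) with hyhdef
    have hyh0 : Tendsto yh atTop (𝓝 0) := by
      have hdinv : Tendsto (fun n => (d n)⁻¹) atTop (𝓝 0) := by
        apply squeeze_zero (fun n => by positivity) (fun n => ?_)
          tendsto_one_div_add_atTop_nhds_zero_nat
        rw [one_div]
        exact inv_anti₀ (by positivity) (hdge n)
      have h := hdinv.smul (hyp.comp hφmono.tendsto_atTop)
      simpa using h
    set ξh : ℕ → G1 ⧸ K1 := fun n => (d n)⁻¹ • ξ (φ n) with hξhdef
    have hξhnorm : ∀ n, ‖ξh n‖ = 1 := by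
      intro n
      rw [hξhdef]
      simp only [norm_smul, norm_inv, Real.norm_eq_abs, abs_of_pos (hdpos n)]
      have hdn : ‖ξ (φ n)‖ = d n := rfl
      rw [hdn]
      exact inv_mul_cancel₀ (ne_of_gt (hdpos n))
    have hTb1ξh : ∀ n, Tb1 (ξh n) = S (yh n) := fun n => by
      simp only [hξhdef, hyhdef, map_smul, hTb1ξ]
    choose xh hxhmk hxhnorm using fun n => Submodule.Quotient.norm_mk_lt (ξh n) one_pos
    have hxhball : ∀ n, xh n ∈ Metric.closedBall (0 : G1) 2 := by
      intro n
      rw [Metric.mem_closedBall, dist_zero_right]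
      have h1 := hxhnorm n
      rw [hξhnorm n] at h1
      linarith
    have hT1xh : ∀ n, T1 (xh n) = S (yh n) := fun n => by
      rw [← hTb1ξh n, ← hxhmk n]
      rfl
    obtain ⟨Kc, hKc, hKsub⟩ := hL.image_closedBall_subset_compact 2
    obtain ⟨b, hbK, ψ, hψmono, hψtend⟩ :=
      hKc.isSeqCompact (x := fun n => L (xh n)) (fun n => hKsub ⟨xh n, hxhball n, rfl⟩)
    have hTb : T2 b = 0 := by
      have h1 : Tendsto (fun n => T2 (L (xh (ψ n)))) atTop (𝓝 (T2 b)) :=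
        (T2.continuous.tendsto b).comp hψtend
      have h2 : Tendsto (fun n => T2 (L (xh (ψ n)))) atTop (𝓝 (S 0)) := by
        have heq : (fun n => T2 (L (xh (ψ n)))) = fun n => S (yh (ψ n)) :=
          funext fun n => by rw [hLT, hT1xh]
        rw [heq]
        exact (S.continuous.tendsto 0).comp (hyh0.comp hψmono.tendsto_atTop)
      have := tendsto_nhds_unique h1 h2
      rwa [map_zero] at this
    have hbK2 : b ∈ K2 := hTb
    have hLbξh : Tendsto (fun n => Lb (ξh (ψ n))) atTop (𝓝 0) := by
      have heq : (fun n => Lb (ξh (ψ n))) = fun n => K2.mkQ (L (xh (ψ n))) := by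
        funext n
        rw [← hxhmk (ψ n)]
        rfl
      rw [heq]
      have h := (hmk2c.tendsto b).comp hψtend
      have hb0 : K2.mkQ b = 0 := (Submodule.Quotient.mk_eq_zero K2).mpr hbK2
      rwa [hb0] at h
    have hmemH1 : ∀ n, ((ξh n, yh n) : (G1 ⧸ K1) × X) ∈ H1 := fun n =>
      (hH1mem _).mpr (hTb1ξh n)
    set ph : ℕ → H1 := fun n => ⟨(ξh n, yh n), hmemH1 n⟩ with hphdef
    have hJtend : Tendsto (fun n => J (ph (ψ n))) atTop (𝓝 0) := by
      rw [tendsto_subtype_rng]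
      have heq : (fun n => ((J (ph (ψ n))) : (G2 ⧸ K2) × X))
          = fun n => (Lb (ξh (ψ n)), yh (ψ n)) := by
        funext n
        rw [hJapply]
      rw [heq]
      have h := hLbξh.prodMk_nhds (hyh0.comp hψmono.tendsto_atTop)
      exact h
    have hph0 : Tendsto (fun n => ph (ψ n)) atTop (𝓝 0) := by
      have hcont := (e.symm.continuous.tendsto 0).comp hJtend
      have heq : (fun n => e.symm (J (ph (ψ n)))) = fun n => ph (ψ n) := funext fun n =>
        ContinuousLinearEquiv.ofBijective_symm_apply_apply J hJker hJrange (ph (ψ n))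
      rw [Function.comp_def, heq, map_zero] at hcont
      exact hcont
    have hfst : Tendsto (fun n => (ph (ψ n) : (G1 ⧸ K1) × X).1) atTop (𝓝 0) := by
      have h := (continuous_subtype_val.tendsto (0 : H1)).comp hph0
      have h2 := (continuous_fst.tendsto ((0 : H1) : (G1 ⧸ K1) × X)).comp h
      simpa [Function.comp_def] using h2
    have hnorm : Tendsto (fun n => ‖(ph (ψ n) : (G1 ⧸ K1) × X).1‖) atTop (𝓝 0) := by
      simpa [Function.comp_def] using (continuous_norm.tendsto (0 : G1 ⧸ K1)).comp hfst
    have hconst : Tendsto (fun _ : ℕ => (1:ℝ)) atTop (𝓝 0) := by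
      have heq : (fun n => ‖(ph (ψ n) : (G1 ⧸ K1) × X).1‖) = fun _ => (1:ℝ) := by
        funext n
        exact hξhnorm (ψ n)
      rwa [heq] at hnorm
    exact zero_ne_one (tendsto_nhds_unique hconst tendsto_const_nhds)

end core

/- Corollary 5.3: property (H′) for a map of pairs between DFS spaces implies
closed range of `T : E → F`.  Pairs are modeled by continuous linear
injections `iE : E →L E♯`, `jF : F →L F♯` and `TE` is the induced map. -/
theorem stmt13
    (E Esharp F Fsharp : Type)
    [AddCommGroup E] [Module ℝ E] [TopologicalSpace E]
    [AddCommGroup Esharp] [Module ℝ Esharp] [TopologicalSpace Esharp]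
    [AddCommGroup F] [Module ℝ F] [TopologicalSpace F]
    [AddCommGroup Fsharp] [Module ℝ Fsharp] [TopologicalSpace Fsharp]
    [T2Space Fsharp]
    (EJ ESJ FJ : ℕ → Type)
    [∀ j, NormedAddCommGroup (EJ j)] [∀ j, NormedSpace ℝ (EJ j)]
    [∀ j, CompleteSpace (EJ j)]
    [∀ j, NormedAddCommGroup (ESJ j)] [∀ j, NormedSpace ℝ (ESJ j)]
    [∀ j, CompleteSpace (ESJ j)]
    [∀ j, NormedAddCommGroup (FJ j)] [∀ j, NormedSpace ℝ (FJ j)]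
    [∀ j, CompleteSpace (FJ j)]
    (linkE : ∀ j, EJ j →L[ℝ] EJ (j + 1)) (inclE : ∀ j, EJ j →L[ℝ] E)
    (linkES : ∀ j, ESJ j →L[ℝ] ESJ (j + 1)) (inclES : ∀ j, ESJ j →L[ℝ] Esharp)
    (linkF : ∀ j, FJ j →L[ℝ] FJ (j + 1)) (inclF : ∀ j, FJ j →L[ℝ] F)
    (hE : IsDFSLimit E EJ linkE inclE)
    (hES : IsDFSLimit Esharp ESJ linkES inclES)
    (hF : IsDFSLimit F FJ linkF inclF)
    (iE : E →L[ℝ] Esharp) (hiE : Function.Injective iE)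
    (jF : F →L[ℝ] Fsharp) (hjF : Function.Injective jF)
    -- E ↪ E♯₀ continuously:
    (e0 : E →L[ℝ] ESJ 0) (he0 : ∀ x : E, inclES 0 (e0 x) = iE x)
    (T : Esharp →L[ℝ] Fsharp) (TE : E →L[ℝ] F)
    (hcomp : ∀ e : E, jF (TE e) = T (iE e))
    -- property (H'):
    (hH' : ∀ u : Esharp, T u ∈ Set.range jF → ∃ v : E, T (iE v) = T u) :
    IsClosed (Set.range TE) := by
  -- every `iE v` is in the range of every `inclES k`
  have hiEmem : ∀ (v : E) (k : ℕ), ∃ u : ESJ k, inclES k u = iE v := by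
    intro v k
    induction k with
    | zero => exact ⟨e0 v, he0 v⟩
    | succ k ih =>
      obtain ⟨u, hu⟩ := ih
      exact ⟨linkES k u, by rw [hES.2.2.2.1 k u, hu]⟩
  -- closedness criterion via the universal property of `F`
  apply isClosed_of_preimages FJ inclF hF.2.2.2.2.2
  intro j
  -- characterization of the preimage via property (H')
  have key : ∀ k : ℕ, (inclF j) ⁻¹' (Set.range TE)
      = ⇑((jF.comp (inclF j))) ⁻¹' (Set.range (T.comp (inclES k))) := by
    intro k
    ext y
    constructor
    · rintro ⟨v, hv⟩
      obtain ⟨u, hu⟩ := hiEmem v k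
      refine ⟨u, ?_⟩
      show T (inclES k u) = jF (inclF j y)
      rw [hu, ← hcomp v, hv]
    · rintro ⟨u, hu⟩
      have hu' : T (inclES k u) = jF (inclF j y) := hu
      have hrange : T (inclES k u) ∈ Set.range jF := ⟨inclF j y, hu'.symm⟩
      obtain ⟨v, hv⟩ := hH' (inclES k u) hrange
      have : jF (TE v) = jF (inclF j y) := by
        rw [hcomp v, hv, hu']
      exact ⟨v, hjF this⟩
  rw [key 1]
  exact core_closed (linkES 1) (hES.2.1 1) (T.comp (inclES 1)) (T.comp (inclES 2))
    (fun x => by show T (inclES 2 (linkES 1 x)) = T (inclES 1 x); rw [hES.2.2.2.1 1 x])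
    (jF.comp (inclF j)) ((key 1).symm.trans (key 2))
end aux
end
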